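/- Let m be a strongly closed and coherent DBM of dimension 2n, let a,b ∈ {0,…,2n−1}, let d ∈ ℚ with m[b,a] + d ≥ 0, and write Q(i,j) = min( m[i,j], m[i,a]+d+m[b,j], m[i,b̄]+d+m[ā,j], m[i,b̄]+d+m[ā,a]+d+m[b,j], m[i,a]+d+m[b,b̄]+d+m[ā,j] ). Define m'[i,ī] = Q(i,ī) for all i. Then for all i,j: min( Q(i,j), (m'[i,ī] + m'[j̄,j])/2 ) = min( Q(i,j), (m[i,a]+d+m[b,ī]+m[j̄,j])/2, (m[i,ī]+m[j̄,a]+d+m[b,j])/2 ); that is, when the input DBM is strongly closed, the strengthening term built from updated key entries can be replaced by the two listed terms built from entries of m. -/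

import Mathlib

namespace Octagon

/-- A DBM of dimension `2*n` with entries in `ℚ ∪ {+∞}`. -/
abbrev DBM (n : ℕ) : Type := Fin (2 * n) → Fin (2 * n) → WithTop ℚ

/-- `bar i = i + 1` if `i` is even, `i - 1` if `i` is odd. -/
def bar {n : ℕ} (i : Fin (2 * n)) : Fin (2 * n) :=
  if h : (i : ℕ) % 2 = 0 then ⟨(i : ℕ) + 1, by have := i.isLt; omega⟩
  else ⟨(i : ℕ) - 1, by have := i.isLt; omega⟩

/-- A DBM is closed iff its diagonal is zero and it satisfies the triangle inequality. -/
def Closed {n : ℕ} (m : DBM n) : Prop :=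
  (∀ i, m i i = 0) ∧ ∀ i j k, m i j ≤ m i k + m k j

/-- A DBM is consistent iff its diagonal entries are nonnegative. -/
def Consistent {n : ℕ} (m : DBM n) : Prop :=
  ∀ i, 0 ≤ m i i

/-- A DBM is coherent iff `m[i,j] = m[bar j, bar i]` for all `i, j`. -/
def Coherent {n : ℕ} (m : DBM n) : Prop :=
  ∀ i j, m i j = m (bar j) (bar i)

/-- Incremental closure of `m` with the new constraint `x'_a - x'_b ≤ d`. -/
def IncClose {n : ℕ} (m : DBM n) (a b : Fin (2 * n)) (d : ℚ) : DBM n :=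
  fun i j =>
    min (m i j) <|
    min (m i a + (d : WithTop ℚ) + m b j) <|
    min (m i (bar b) + (d : WithTop ℚ) + m (bar a) j) <|
    min (m i (bar b) + (d : WithTop ℚ) + m (bar a) a + (d : WithTop ℚ) + m b j)
        (m i a + (d : WithTop ℚ) + m b (bar b) + (d : WithTop ℚ) + m (bar a) j)

/-- Halving on `ℚ ∪ {+∞}`, mapping `+∞` to `+∞`. -/
def halve : WithTop ℚ → WithTop ℚ := WithTop.map (fun x => x / 2)

/-- Strengthening of a DBM. -/
def Strengthen {n : ℕ} (m : DBM n) : DBM n :=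
  fun i j => min (m i j) (halve (m i (bar i) + m (bar j) j))

theorem bar_val {n : ℕ} (i : Fin (2 * n)) :
    ((bar i : Fin (2 * n)) : ℕ) = if (i : ℕ) % 2 = 0 then (i : ℕ) + 1 else (i : ℕ) - 1 := by
  unfold bar
  split_ifs <;> rfl

theorem bar_bar {n : ℕ} (i : Fin (2 * n)) : bar (bar i) = i := by
  apply Fin.ext
  rw [bar_val, bar_val]
  have h2 := i.isLt
  split_ifs <;> omega

theorem halve_add (x y : WithTop ℚ) : halve (x + y) = halve x + halve y := by
  cases x with
  | top => simp [halve]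
  | coe p =>
    cases y with
    | top => simp [halve]
    | coe q =>
      rw [← WithTop.coe_add]
      simp only [halve, WithTop.map_coe, ← WithTop.coe_add, WithTop.coe_inj]
      ring

theorem halve_double (x : WithTop ℚ) : halve (x + x) = x := by
  cases x with
  | top => simp [halve]
  | coe p =>
    rw [← WithTop.coe_add]
    simp only [halve, WithTop.map_coe, WithTop.coe_inj]
    ring

theorem halve_mono : Monotone halve := by
  intro x y h
  cases y with
  | top => exact le_top
  | coe q =>
    cases x with
    | top => simp at h
    | coe p =>
      rw [WithTop.coe_le_coe] at h
      simp only [halve, WithTop.map_coe, WithTop.coe_le_coe]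
      linarith

theorem le_halve_of_add_le {z s : WithTop ℚ} (h : z + z ≤ s) : z ≤ halve s :=
  (halve_double z).symm.trans_le (halve_mono h)

theorem halve_add_halve (x : WithTop ℚ) : halve x + halve x = x := by
  rw [← halve_add, halve_double]

theorem min5_choice {α : Type*} [LinearOrder α] (a b c d e : α) :
    min a (min b (min c (min d e))) = a ∨ min a (min b (min c (min d e))) = b ∨
    min a (min b (min c (min d e))) = c ∨ min a (min b (min c (min d e))) = d ∨
    min a (min b (min c (min d e))) = e := by
  rcases min_choice a (min b (min c (min d e))) with h | h
  · exact Or.inl h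
  rcases min_choice b (min c (min d e)) with h2 | h2
  · exact Or.inr (Or.inl (h.trans h2))
  rcases min_choice c (min d e) with h3 | h3
  · exact Or.inr (Or.inr (Or.inl ((h.trans h2).trans h3)))
  rcases min_choice d e with h4 | h4
  · exact Or.inr (Or.inr (Or.inr (Or.inl (((h.trans h2).trans h3).trans h4))))
  · exact Or.inr (Or.inr (Or.inr (Or.inr (((h.trans h2).trans h3).trans h4))))

/-- Theorem: when the input DBM is strongly closed and coherent and
`m[b,a] + d ≥ 0`, the strengthening term built from the updated key entries
can be replaced by the two listed terms built from entries of `m`. -/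
theorem incStrongClose_reduce {n : ℕ} (m : DBM n) (hcl : Closed m)
    (hstrong : ∀ i j, m i j ≤ halve (m i (bar i)) + halve (m (bar j) j))
    (hcoh : Coherent m) (a b : Fin (2 * n)) (d : ℚ)
    (hd : 0 ≤ m b a + (d : WithTop ℚ)) :
    ∀ i j,
      min (IncClose m a b d i j)
          (halve (IncClose m a b d i (bar i) + IncClose m a b d (bar j) j)) =
      min (IncClose m a b d i j)
          (min (halve (m i a + (d : WithTop ℚ) + m b (bar i) + m (bar j) j))
               (halve (m i (bar i) + m (bar j) a + (d : WithTop ℚ) + m b j))) := by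
  intro i j
  have hbb := bar_bar b
  have hba := bar_bar a
  have hbi := bar_bar i
  have hbj := bar_bar j
  have hc1 : m i (bar b) = m b (bar i) := by have h := hcoh i (bar b); rwa [hbb] at h
  have hc2 : m (bar a) (bar i) = m i a := by
    have h := hcoh (bar a) (bar i); rwa [hbi, hba] at h
  have hc3 : m (bar j) (bar b) = m b j := by
    have h := hcoh (bar j) (bar b); rwa [hbb, hbj] at h
  have hc4 : m (bar a) j = m (bar j) a := by have h := hcoh (bar a) j; rwa [hba] at h
  have dbl : ∀ x y, m x y + m x y ≤ m x (bar x) + m (bar y) y := by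
    intro x y
    have h := hstrong x y
    calc m x y + m x y
        ≤ (halve (m x (bar x)) + halve (m (bar y) y)) +
          (halve (m x (bar x)) + halve (m (bar y) y)) := add_le_add h h
      _ = (halve (m x (bar x)) + halve (m x (bar x))) +
          (halve (m (bar y) y) + halve (m (bar y) y)) := by abel
      _ = m x (bar x) + m (bar y) y := by rw [halve_add_halve, halve_add_halve]
  have s1 : m (bar a) j + m (bar a) j ≤ m (bar a) a + m (bar j) j := by
    have h := dbl (bar a) j; rwa [hba] at h
  have s2 : m i a + m i a ≤ m i (bar i) + m (bar a) a := dbl i a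
  have s3 : m b j + m b j ≤ m b (bar b) + m (bar j) j := dbl b j
  have s4 : m i (bar b) + m i (bar b) ≤ m i (bar i) + m b (bar b) := by
    have h := dbl i (bar b); rwa [hbb] at h
  have s5 : m b a + m b a ≤ m b (bar b) + m (bar a) a := dbl b a
  have sij : m i j + m i j ≤ m i (bar i) + m (bar j) j := dbl i j
  have hM1 : IncClose m a b d i j ≤ m i j := by
    unfold IncClose; exact min_le_left _ _
  have hM2 : IncClose m a b d i j ≤ m i a + (d : WithTop ℚ) + m b j := by
    unfold IncClose; exact (min_le_right _ _).trans (min_le_left _ _)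
  have hM3 : IncClose m a b d i j ≤ m i (bar b) + (d : WithTop ℚ) + m (bar a) j := by
    unfold IncClose
    exact (min_le_right _ _).trans ((min_le_right _ _).trans (min_le_left _ _))
  have hM4 : IncClose m a b d i j ≤
      m i (bar b) + (d : WithTop ℚ) + m (bar a) a + (d : WithTop ℚ) + m b j := by
    unfold IncClose
    exact (min_le_right _ _).trans ((min_le_right _ _).trans
      ((min_le_right _ _).trans (min_le_left _ _)))
  have hM5 : IncClose m a b d i j ≤
      m i a + (d : WithTop ℚ) + m b (bar b) + (d : WithTop ℚ) + m (bar a) j := by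
    unfold IncClose
    exact (min_le_right _ _).trans ((min_le_right _ _).trans
      ((min_le_right _ _).trans (min_le_right _ _)))
  apply le_antisymm
  · refine le_min (min_le_left _ _) (le_min ?_ ?_)
    · have hX2 : IncClose m a b d i (bar i) ≤ m i a + (d : WithTop ℚ) + m b (bar i) := by
        unfold IncClose; exact (min_le_right _ _).trans (min_le_left _ _)
      have hY1 : IncClose m a b d (bar j) j ≤ m (bar j) j := by
        unfold IncClose; exact min_le_left _ _
      exact (min_le_right _ _).trans (halve_mono (add_le_add hX2 hY1))
    · have hX1 : IncClose m a b d i (bar i) ≤ m i (bar i) := by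
        unfold IncClose; exact min_le_left _ _
      have hY2 : IncClose m a b d (bar j) j ≤ m (bar j) a + (d : WithTop ℚ) + m b j := by
        unfold IncClose; exact (min_le_right _ _).trans (min_le_left _ _)
      refine (min_le_right _ _).trans
        ((halve_mono (add_le_add hX1 hY2)).trans (le_of_eq ?_))
      congr 1
      abel
  · refine le_min (min_le_left _ _) ?_
    have hR0 : min (IncClose m a b d i j)
        (min (halve (m i a + (d : WithTop ℚ) + m b (bar i) + m (bar j) j))
             (halve (m i (bar i) + m (bar j) a + (d : WithTop ℚ) + m b j))) ≤
        IncClose m a b d i j := min_le_left _ _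
    have hR1 : min (IncClose m a b d i j)
        (min (halve (m i a + (d : WithTop ℚ) + m b (bar i) + m (bar j) j))
             (halve (m i (bar i) + m (bar j) a + (d : WithTop ℚ) + m b j))) ≤
        halve (m i a + (d : WithTop ℚ) + m b (bar i) + m (bar j) j) :=
      (min_le_right _ _).trans (min_le_left _ _)
    have hR2 : min (IncClose m a b d i j)
        (min (halve (m i a + (d : WithTop ℚ) + m b (bar i) + m (bar j) j))
             (halve (m i (bar i) + m (bar j) a + (d : WithTop ℚ) + m b j))) ≤
        halve (m i (bar i) + m (bar j) a + (d : WithTop ℚ) + m b j) :=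
      (min_le_right _ _).trans (min_le_right _ _)
    have hX : IncClose m a b d i (bar i) = m i (bar i) ∨
        IncClose m a b d i (bar i) = m i a + (d : WithTop ℚ) + m b (bar i) ∨
        IncClose m a b d i (bar i) = m i (bar b) + (d : WithTop ℚ) + m (bar a) (bar i) ∨
        IncClose m a b d i (bar i) =
          m i (bar b) + (d : WithTop ℚ) + m (bar a) a + (d : WithTop ℚ) + m b (bar i) ∨
        IncClose m a b d i (bar i) =
          m i a + (d : WithTop ℚ) + m b (bar b) + (d : WithTop ℚ) + m (bar a) (bar i) := by
      unfold IncClose; exact min5_choice _ _ _ _ _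
    have hY : IncClose m a b d (bar j) j = m (bar j) j ∨
        IncClose m a b d (bar j) j = m (bar j) a + (d : WithTop ℚ) + m b j ∨
        IncClose m a b d (bar j) j = m (bar j) (bar b) + (d : WithTop ℚ) + m (bar a) j ∨
        IncClose m a b d (bar j) j =
          m (bar j) (bar b) + (d : WithTop ℚ) + m (bar a) a + (d : WithTop ℚ) + m b j ∨
        IncClose m a b d (bar j) j =
          m (bar j) a + (d : WithTop ℚ) + m b (bar b) + (d : WithTop ℚ) + m (bar a) j := by
      unfold IncClose; exact min5_choice _ _ _ _ _
    rcases hX with h | h | h | h | h <;> rcases hY with g | g | g | g | g <;> rw [h, g]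
    -- (1,1)
    · exact hR0.trans (le_halve_of_add_le ((add_le_add hM1 hM1).trans sij))
    -- (1,2)
    · refine hR2.trans (le_of_eq ?_)
      congr 1
      abel
    -- (1,3)
    · refine hR2.trans (le_of_eq ?_)
      congr 1
      rw [hc3, hc4]
      abel
    -- (1,4)
    · refine hR0.trans (le_halve_of_add_le ?_)
      calc IncClose m a b d i j + IncClose m a b d i j
          ≤ (m i a + (d : WithTop ℚ) + m b j) + (m i a + (d : WithTop ℚ) + m b j) :=
            add_le_add hM2 hM2
        _ = (m i a + m i a) +
            ((d : WithTop ℚ) + m b j + ((d : WithTop ℚ) + m b j)) := by abel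
        _ ≤ (m i (bar i) + m (bar a) a) +
            ((d : WithTop ℚ) + m b j + ((d : WithTop ℚ) + m b j)) := add_le_add_left s2 _
        _ = m i (bar i) +
            (m (bar j) (bar b) + (d : WithTop ℚ) + m (bar a) a + (d : WithTop ℚ) + m b j) := by
            rw [hc3]; abel
    -- (1,5)
    · refine hR0.trans (le_halve_of_add_le ?_)
      calc IncClose m a b d i j + IncClose m a b d i j
          ≤ (m i (bar b) + (d : WithTop ℚ) + m (bar a) j) +
            (m i (bar b) + (d : WithTop ℚ) + m (bar a) j) := add_le_add hM3 hM3
        _ = (m i (bar b) + m i (bar b)) +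
            ((d : WithTop ℚ) + m (bar a) j + ((d : WithTop ℚ) + m (bar a) j)) := by abel
        _ ≤ (m i (bar i) + m b (bar b)) +
            ((d : WithTop ℚ) + m (bar a) j + ((d : WithTop ℚ) + m (bar a) j)) :=
            add_le_add_left s4 _
        _ = m i (bar i) +
            (m (bar j) a + (d : WithTop ℚ) + m b (bar b) + (d : WithTop ℚ) + m (bar a) j) := by
            rw [hc4]; abel
    -- (2,1)
    · exact hR1
    -- (2,2)
    · refine hR0.trans (le_halve_of_add_le ((add_le_add hM2 hM3).trans (le_of_eq ?_)))
      rw [hc1, hc4]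
      abel
    -- (2,3)
    · refine hR0.trans (le_halve_of_add_le ((add_le_add hM2 hM3).trans (le_of_eq ?_)))
      rw [hc1, hc3, hc4]
      abel
    -- (2,4)
    · refine hR0.trans (le_halve_of_add_le ((add_le_add hM2 hM4).trans (le_of_eq ?_)))
      rw [hc1, hc3]
      abel
    -- (2,5)
    · refine hR0.trans (le_halve_of_add_le ((add_le_add hM3 hM5).trans (le_of_eq ?_)))
      rw [hc1, hc4]
      abel
    -- (3,1)
    · refine hR1.trans (le_of_eq ?_)
      congr 1
      rw [hc1, hc2]
      abel
    -- (3,2)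
    · refine hR0.trans (le_halve_of_add_le ((add_le_add hM2 hM3).trans (le_of_eq ?_)))
      rw [hc1, hc2, hc4]
      abel
    -- (3,3)
    · refine hR0.trans (le_halve_of_add_le ((add_le_add hM2 hM3).trans (le_of_eq ?_)))
      rw [hc1, hc2, hc3, hc4]
      abel
    -- (3,4)
    · refine hR0.trans (le_halve_of_add_le ((add_le_add hM2 hM4).trans (le_of_eq ?_)))
      rw [hc1, hc2, hc3]
      abel
    -- (3,5)
    · refine hR0.trans (le_halve_of_add_le ((add_le_add hM3 hM5).trans (le_of_eq ?_)))
      rw [hc1, hc2, hc4]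
      abel
    -- (4,1)
    · refine hR0.trans (le_halve_of_add_le ?_)
      calc IncClose m a b d i j + IncClose m a b d i j
          ≤ (m i (bar b) + (d : WithTop ℚ) + m (bar a) j) +
            (m i (bar b) + (d : WithTop ℚ) + m (bar a) j) := add_le_add hM3 hM3
        _ = (m (bar a) j + m (bar a) j) +
            (m i (bar b) + m i (bar b) + ((d : WithTop ℚ) + (d : WithTop ℚ))) := by abel
        _ ≤ (m (bar a) a + m (bar j) j) +
            (m i (bar b) + m i (bar b) + ((d : WithTop ℚ) + (d : WithTop ℚ))) :=
            add_le_add_left s1 _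
        _ = m i (bar b) + (d : WithTop ℚ) + m (bar a) a + (d : WithTop ℚ) + m b (bar i) +
            m (bar j) j := by rw [hc1]; abel
    -- (4,2)
    · refine hR0.trans (le_halve_of_add_le ((add_le_add hM3 hM4).trans (le_of_eq ?_)))
      rw [hc1, hc4]
      abel
    -- (4,3)
    · refine hR0.trans (le_halve_of_add_le ((add_le_add hM3 hM4).trans (le_of_eq ?_)))
      rw [hc1, hc3, hc4]
      abel
    -- (4,4)
    · refine hR0.trans (le_halve_of_add_le ((add_le_add hM4 hM4).trans (le_of_eq ?_)))
      rw [hc1, hc3]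
      abel
    -- (4,5)
    · refine hR0.trans (le_halve_of_add_le ?_)
      calc IncClose m a b d i j + IncClose m a b d i j
          ≤ (m i (bar b) + (d : WithTop ℚ) + m (bar a) j) +
            (m i (bar b) + (d : WithTop ℚ) + m (bar a) j) := add_le_add hM3 hM3
        _ ≤ (m i (bar b) + (d : WithTop ℚ) + m (bar a) j) +
            (m i (bar b) + (d : WithTop ℚ) + m (bar a) j) +
            ((m b a + (d : WithTop ℚ)) + (m b a + (d : WithTop ℚ))) :=
            le_add_of_nonneg_right (add_nonneg hd hd)
        _ = (m b a + m b a) +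
            ((m i (bar b) + m i (bar b)) + (m (bar a) j + m (bar a) j) +
             ((d : WithTop ℚ) + (d : WithTop ℚ) + ((d : WithTop ℚ) + (d : WithTop ℚ)))) := by
            abel
        _ ≤ (m b (bar b) + m (bar a) a) +
            ((m i (bar b) + m i (bar b)) + (m (bar a) j + m (bar a) j) +
             ((d : WithTop ℚ) + (d : WithTop ℚ) + ((d : WithTop ℚ) + (d : WithTop ℚ)))) :=
            add_le_add_left s5 _
        _ = m i (bar b) + (d : WithTop ℚ) + m (bar a) a + (d : WithTop ℚ) + m b (bar i) +
            (m (bar j) a + (d : WithTop ℚ) + m b (bar b) + (d : WithTop ℚ) + m (bar a) j) := by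
            rw [hc1, hc4]; abel
    -- (5,1)
    · refine hR0.trans (le_halve_of_add_le ?_)
      calc IncClose m a b d i j + IncClose m a b d i j
          ≤ (m i a + (d : WithTop ℚ) + m b j) + (m i a + (d : WithTop ℚ) + m b j) :=
            add_le_add hM2 hM2
        _ = (m b j + m b j) + (m i a + m i a + ((d : WithTop ℚ) + (d : WithTop ℚ))) := by abel
        _ ≤ (m b (bar b) + m (bar j) j) +
            (m i a + m i a + ((d : WithTop ℚ) + (d : WithTop ℚ))) := add_le_add_left s3 _
        _ = m i a + (d : WithTop ℚ) + m b (bar b) + (d : WithTop ℚ) + m (bar a) (bar i) +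
            m (bar j) j := by rw [hc2]; abel
    -- (5,2)
    · refine hR0.trans (le_halve_of_add_le ((add_le_add hM2 hM5).trans (le_of_eq ?_)))
      rw [hc2, hc4]
      abel
    -- (5,3)
    · refine hR0.trans (le_halve_of_add_le ((add_le_add hM2 hM5).trans (le_of_eq ?_)))
      rw [hc2, hc3, hc4]
      abel
    -- (5,4)
    · refine hR0.trans (le_halve_of_add_le ?_)
      calc IncClose m a b d i j + IncClose m a b d i j
          ≤ (m i a + (d : WithTop ℚ) + m b j) + (m i a + (d : WithTop ℚ) + m b j) :=
            add_le_add hM2 hM2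
        _ ≤ (m i a + (d : WithTop ℚ) + m b j) + (m i a + (d : WithTop ℚ) + m b j) +
            ((m b a + (d : WithTop ℚ)) + (m b a + (d : WithTop ℚ))) :=
            le_add_of_nonneg_right (add_nonneg hd hd)
        _ = (m b a + m b a) +
            ((m i a + m i a) + (m b j + m b j) +
             ((d : WithTop ℚ) + (d : WithTop ℚ) + ((d : WithTop ℚ) + (d : WithTop ℚ)))) := by
            abel
        _ ≤ (m b (bar b) + m (bar a) a) +
            ((m i a + m i a) + (m b j + m b j) +
             ((d : WithTop ℚ) + (d : WithTop ℚ) + ((d : WithTop ℚ) + (d : WithTop ℚ)))) :=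
            add_le_add_left s5 _
        _ = m i a + (d : WithTop ℚ) + m b (bar b) + (d : WithTop ℚ) + m (bar a) (bar i) +
            (m (bar j) (bar b) + (d : WithTop ℚ) + m (bar a) a + (d : WithTop ℚ) + m b j) := by
            rw [hc2, hc3]; abel
    -- (5,5)
    · refine hR0.trans (le_halve_of_add_le ((add_le_add hM5 hM5).trans (le_of_eq ?_)))
      rw [hc2, hc4]
      abel

end Octagon
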